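/- arXiv:math/0702051 — 2 statements merged into one kernel-verified Lean document; each statement's English description precedes it below -/
import Mathlib

section
/- Let M be a compact polynomially convex subset of C^N and let E be a finite or countably infinite subset of C^N \ M such that M ∪ E is compact. Then M ∪ E is polynomially convex. -/
open MvPolynomial Set

/-- The complex absolute value, as an absolute value. -/
noncomputable def cabs : AbsoluteValue ℂ ℝ where
  toFun z := ‖z‖
  map_mul' := norm_mul
  nonneg' := norm_nonneg
  eq_zero' _ := norm_eq_zero
  add_le' := norm_add_le

lemma cantor_uncount : ¬ Countable (ℕ → Bool) := by
  intro h
  obtain ⟨g, hg⟩ := Countable.exists_injective_nat (ℕ → Bool)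
  set d : ℕ → Bool := fun n => ! (Function.invFun g n n) with hd
  have h1 : Function.invFun g (g d) = d := Function.leftInverse_invFun hg d
  have h2 : d (g d) = ! (Function.invFun g (g d) (g d)) := rfl
  rw [h1] at h2
  simp at h2

/-- A nonempty countable compact set has a point outside its derived set. -/
lemma exists_isolated {α : Type*} [MetricSpace α] [CompleteSpace α] {S : Set α}
    (hS : IsCompact S) (hScnt : S.Countable) (hne : S.Nonempty) :
    ¬ S ⊆ derivedSet S := by
  intro hsub
  have hperf : Perfect S := ⟨hS.isClosed, fun x hx => hsub hx⟩
  obtain ⟨f, hfr, -, hfi⟩ := hperf.exists_nat_bool_injection hne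
  have h1 : (Set.range f).Countable := hScnt.mono hfr
  have h2 : Countable (Set.range f) := h1.to_subtype
  exact cantor_uncount (Countable.of_equiv _ (Equiv.ofInjective f hfi).symm)


lemma contA {N : ℕ} (p : MvPolynomial (Fin N) ℂ) :
    Continuous fun w : Fin N → ℂ => cabs (eval w p) :=
  continuous_norm.comp (MvPolynomial.continuous_eval p)

lemma exists_bound {N : ℕ} {K : Set (Fin N → ℂ)} (hK : IsCompact K) (p : MvPolynomial (Fin N) ℂ) :
    ∃ C : ℝ, 0 < C ∧ ∀ w ∈ K, cabs (eval w p) ≤ C := by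
  rcases K.eq_empty_or_nonempty with h | h
  · exact ⟨1, one_pos, by simp [h]⟩
  · obtain ⟨x, hx, hmax⟩ := hK.exists_isMaxOn h (contA p).continuousOn
    refine ⟨cabs (eval x p) + 1, by positivity, fun w hw => ?_⟩
    exact (hmax hw).trans (le_add_of_nonneg_right one_pos.le)

lemma exists_lt_one_bound {N : ℕ} {K : Set (Fin N → ℂ)} (hK : IsCompact K)
    (p : MvPolynomial (Fin N) ℂ) (h : ∀ w ∈ K, cabs (eval w p) < 1) :
    ∃ c : ℝ, 0 ≤ c ∧ c < 1 ∧ ∀ w ∈ K, cabs (eval w p) ≤ c := by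
  rcases K.eq_empty_or_nonempty with he | hne
  · exact ⟨0, le_refl 0, one_pos, by simp [he]⟩
  · obtain ⟨x, hx, hmax⟩ := hK.exists_isMaxOn hne (contA p).continuousOn
    exact ⟨cabs (eval x p), AbsoluteValue.nonneg _ _, h x hx, fun w hw => hmax hw⟩

lemma exists_vanishing {N : ℕ} {F : Set (Fin N → ℂ)} (hF : F.Finite) {z : Fin N → ℂ}
    (hz : z ∉ F) :
    ∃ g : MvPolynomial (Fin N) ℂ, eval z g = 1 ∧ ∀ w ∈ F, eval w g = 0 := by
  classical
  have key : ∀ e ∈ F, ∃ i, e i ≠ z i := by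
    intro e he
    by_contra hc
    push_neg at hc
    exact hz (by rwa [show z = e from funext fun i => (hc i).symm])
  set ge : (Fin N → ℂ) → MvPolynomial (Fin N) ℂ := fun e =>
    if h : ∃ i, e i ≠ z i then
      C (z h.choose - e h.choose)⁻¹ * (X h.choose - C (e h.choose)) else 1 with hge
  refine ⟨∏ e ∈ hF.toFinset, ge e, ?_, ?_⟩
  · rw [map_prod]
    apply Finset.prod_eq_one
    intro e he
    rw [Set.Finite.mem_toFinset] at he
    have hne := key e he
    have hnz : z hne.choose - e hne.choose ≠ 0 := sub_ne_zero.mpr (Ne.symm hne.choose_spec)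
    rw [hge]
    simp only [dif_pos hne, map_mul, eval_C, map_sub, eval_X]
    exact inv_mul_cancel₀ hnz
  · intro w hw
    rw [map_prod]
    apply Finset.prod_eq_zero ((Set.Finite.mem_toFinset hF).mpr hw)
    have hne := key w hw
    rw [hge]
    simp only [dif_pos hne, map_mul, eval_C, map_sub, eval_X]
    simp

/-- Auxiliary predicate: `p` separates `z` from `M ∪ S₀`, with norm at most 1 on `K \ T`. -/
def GoodFor {N : ℕ} (M K T : Set (Fin N → ℂ)) (z : Fin N → ℂ) (S₀ : Set (Fin N → ℂ)) : Prop :=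
  ∃ p : MvPolynomial (Fin N) ℂ, eval z p = 1 ∧
    (∀ w ∈ M ∪ S₀, cabs (eval w p) < 1) ∧
    (∀ w ∈ K \ T, cabs (eval w p) ≤ 1)

/-- The inductive (Cantor–Bendixson) step: if the derived set of a compact `m ⊆ T` is good,
then so is `m`. -/
lemma goodFor_step {N : ℕ} {M K T : Set (Fin N → ℂ)} {q : MvPolynomial (Fin N) ℂ} {s : ℝ}
    {z : Fin N → ℂ}
    (hM : IsCompact M) (hK : IsCompact K) (hMK : M ⊆ K) (hzK : z ∉ K)
    (hs0 : 0 < s) (hs1 : s < 1)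
    (hqz : eval z q = 1)
    (hT : T = {w ∈ K | s ≤ cabs (eval w q)})
    {m : Set (Fin N → ℂ)} (hmT : m ⊆ T) (hmcmp : IsCompact m)
    (hDgood : GoodFor M K T z (derivedSet m)) : GoodFor M K T z m := by
  classical
  have hTK : T ⊆ K := by rw [hT]; exact fun w hw => hw.1
  have hmK : m ⊆ K := hmT.trans hTK
  obtain ⟨h, hz1, hlt, hle⟩ := hDgood
  have hDm : derivedSet m ⊆ m := (isClosed_iff_derivedSet_subset m).mp hmcmp.isClosed
  have hDcmp : IsCompact (derivedSet m) :=
    hmcmp.of_isClosed_subset (isClosed_derivedSet m) hDm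
  -- uniform bound < 1 on M ∪ derivedSet m
  obtain ⟨c₁, hc₁0, hc₁1, hc₁⟩ := exists_lt_one_bound (hM.union hDcmp) h hlt
  set c' : ℝ := (c₁ + 1) / 2 with hc'
  have hc₁c' : c₁ < c' := by rw [hc']; linarith
  have hc'1 : c' < 1 := by rw [hc']; linarith
  have hc'0 : 0 ≤ c' := by rw [hc']; linarith
  -- the finite exceptional set
  set F : Set (Fin N → ℂ) := m ∩ {w | c' ≤ cabs (eval w h)} with hF
  have hFcl : IsClosed F := hmcmp.isClosed.inter (isClosed_le continuous_const (contA h))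
  have hFcmp : IsCompact F := hmcmp.of_isClosed_subset hFcl inter_subset_left
  have hFfin : F.Finite := by
    by_contra hinf
    have hinf' : F.Infinite := hinf
    obtain ⟨x, hxF, hacc⟩ := hinf'.exists_accPt_of_subset_isCompact hFcmp (subset_refl F)
    have hxD : x ∈ derivedSet m :=
      hacc.mono (Filter.principal_mono.mpr inter_subset_left)
    have h1 : cabs (eval x h) ≤ c₁ := hc₁ x (Or.inr hxD)
    have h2 : c' ≤ cabs (eval x h) := hxF.2
    linarith
  have hzF : z ∉ F := fun hzF => hzK (hmK hzF.1)
  obtain ⟨g₀, hg₀z, hg₀F⟩ := exists_vanishing hFfin hzF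
  obtain ⟨C₀, hC₀0, hC₀⟩ := exists_bound hK g₀
  obtain ⟨k, hk⟩ := exists_pow_lt_of_lt_one (inv_pos.mpr hC₀0) hs1
  have hC₀s : C₀ * s ^ k < 1 := by
    calc C₀ * s ^ k < C₀ * C₀⁻¹ := by
          exact mul_lt_mul_of_pos_left hk hC₀0
      _ = 1 := mul_inv_cancel₀ (ne_of_gt hC₀0)
  set g : MvPolynomial (Fin N) ℂ := g₀ * q ^ k with hg
  obtain ⟨Cg, hCg0, hCg⟩ := exists_bound hK g
  obtain ⟨n, hn⟩ := exists_pow_lt_of_lt_one (inv_pos.mpr hCg0) hc'1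
  have hcn : c' ^ n * Cg < 1 := by
    calc c' ^ n * Cg < Cg⁻¹ * Cg := by
          exact mul_lt_mul_of_pos_right hn hCg0
      _ = 1 := inv_mul_cancel₀ (ne_of_gt hCg0)
  refine ⟨h ^ n * g, ?_, ?_, ?_⟩
  · rw [hg]; simp [map_mul, map_pow, hz1, hqz, hg₀z]
  · intro w hw
    have hwK : w ∈ K := hw.elim (fun h' => hMK h') (fun h' => hmK h')
    by_cases hwF : w ∈ F
    · rw [hg]
      simp [map_mul, map_pow, hg₀F w hwF]
    · have hhw : cabs (eval w h) ≤ c' := by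
        rcases hw with hw | hw
        · exact (hc₁ w (Or.inl hw)).trans hc₁c'.le
        · by_contra hgt
          push_neg at hgt
          exact hwF ⟨hw, hgt.le⟩
      have : cabs (eval w (h ^ n * g)) = cabs (eval w h) ^ n *
          cabs (eval w g) := by
        rw [map_mul, map_mul, map_pow, map_pow]
      rw [this]
      calc cabs (eval w h) ^ n * cabs (eval w g)
          ≤ c' ^ n * Cg := by
            apply mul_le_mul (pow_le_pow_left₀ (AbsoluteValue.nonneg _ _) hhw n)
              (hCg w hwK) (AbsoluteValue.nonneg _ _) (pow_nonneg hc'0 n)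
        _ < 1 := hcn
  · intro w hw
    have hqw : cabs (eval w q) < s := by
      by_contra hge
      push_neg at hge
      exact hw.2 (by rw [hT]; exact ⟨hw.1, hge⟩)
    have hhw : cabs (eval w h) ≤ 1 := hle w hw
    have : cabs (eval w (h ^ n * g)) = cabs (eval w h) ^ n *
        (cabs (eval w g₀) * cabs (eval w q) ^ k) := by
      rw [hg, map_mul, map_mul, map_mul, map_pow, map_pow, map_mul, map_pow, map_pow]
    rw [this]
    calc cabs (eval w h) ^ n * (cabs (eval w g₀) * cabs (eval w q) ^ k)
        ≤ 1 * (C₀ * s ^ k) := by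
          apply mul_le_mul (pow_le_one₀ (AbsoluteValue.nonneg _ _) hhw)
          · apply mul_le_mul (hC₀ w hw.1)
              (pow_le_pow_left₀ (AbsoluteValue.nonneg _ _) hqw.le k)
              (pow_nonneg (AbsoluteValue.nonneg _ _) k) hC₀0.le
          · positivity
          · exact zero_le_one
      _ = C₀ * s ^ k := one_mul _
      _ ≤ 1 := hC₀s.le

/-- Every compact subset of `T` is good. -/
lemma goodFor_all {N : ℕ} {M K T : Set (Fin N → ℂ)} {q : MvPolynomial (Fin N) ℂ} {s : ℝ}
    {z : Fin N → ℂ}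
    (hM : IsCompact M) (hK : IsCompact K) (hMK : M ⊆ K) (hzK : z ∉ K)
    (hs0 : 0 < s) (hs1 : s < 1)
    (hqz : eval z q = 1)
    (hT : T = {w ∈ K | s ≤ cabs (eval w q)})
    (hTcnt : T.Countable)
    (hqM : ∀ w ∈ M, cabs (eval w q) < s)
    {S : Set (Fin N → ℂ)} (hST : S ⊆ T) (hScmp : IsCompact S) :
    GoodFor M K T z S := by
  classical
  by_contra hbad
  have hTK : T ⊆ K := by rw [hT]; exact fun w hw => hw.1
  set B : Set (Set (Fin N → ℂ)) := {S₀ | S₀ ⊆ T ∧ IsCompact S₀ ∧ ¬ GoodFor M K T z S₀} with hB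
  have hzorn : ∀ c ⊆ B, IsChain (· ⊆ ·) c → c.Nonempty → ∃ lb ∈ B, ∀ s ∈ c, lb ⊆ s := by
    rintro c hcB hchain ⟨S₁, hS₁⟩
    have hccmp : ∀ S₂ ∈ c, IsCompact S₂ := fun S₂ h => (hcB h).2.1
    refine ⟨⋂₀ c, ⟨?_, ?_, ?_⟩, fun t ht => sInter_subset_of_mem ht⟩
    · exact (sInter_subset_of_mem hS₁).trans (hcB hS₁).1
    · exact (hccmp S₁ hS₁).of_isClosed_subset
        (isClosed_sInter fun S₂ hS₂ => (hccmp S₂ hS₂).isClosed) (sInter_subset_of_mem hS₁)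
    · rintro ⟨h, hz1, hlt, hle⟩
      set U := {w : Fin N → ℂ | cabs (eval w h) < 1} with hU
      have hUopen : IsOpen U := isOpen_lt (contA h) continuous_const
      have hexU : ∃ S₂ ∈ c, S₂ \ U = ∅ := by
        by_contra hno
        push_neg at hno
        have hne : Nonempty c := ⟨⟨S₁, hS₁⟩⟩
        have hdir : Directed (· ⊇ ·) fun i : c => (i : Set (Fin N → ℂ)) \ U := by
          intro i j
          rcases hchain.total i.2 j.2 with hij | hij
          · exact ⟨i, subset_refl _, diff_subset_diff_left hij⟩
          · exact ⟨j, diff_subset_diff_left hij, subset_refl _⟩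
        obtain ⟨x, hx⟩ := IsCompact.nonempty_iInter_of_directed_nonempty_isCompact_isClosed
          (fun i : c => (i : Set (Fin N → ℂ)) \ U) hdir
          (fun i => (hno i i.2))
          (fun i => (hccmp i i.2).diff hUopen)
          (fun i => ((hccmp i i.2).isClosed).sdiff hUopen)
        simp only [mem_iInter] at hx
        have hx1 : x ∈ ⋂₀ c := by
          rw [mem_sInter]; exact fun t ht => (hx ⟨t, ht⟩).1
        exact (hx ⟨S₁, hS₁⟩).2 (hlt x (Or.inr hx1))
      obtain ⟨S₂, hS₂c, hS₂U⟩ := hexU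
      refine (hcB hS₂c).2.2 ⟨h, hz1, fun w hw => ?_, hle⟩
      rcases hw with hw | hw
      · exact hlt w (Or.inl hw)
      · have : w ∈ U := by
          by_contra hwu
          exact (Set.eq_empty_iff_forall_notMem.mp hS₂U w) ⟨hw, hwu⟩
        exact this
  obtain ⟨m, -, hmB, hmin⟩ := zorn_superset_nonempty B hzorn S ⟨hST, hScmp, hbad⟩
  obtain ⟨hmT, hmcmp, hmbad⟩ := hmB
  -- minimal bad set is nonempty
  have hmne : m.Nonempty := by
    rcases m.eq_empty_or_nonempty with he | hne
    · refine absurd ?_ hmbad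
      rw [he]
      refine ⟨q, hqz, fun w hw => ?_, fun w hw => ?_⟩
      · rcases hw with hw | hw
        · exact (hqM w hw).trans hs1
        · exact absurd hw (Set.notMem_empty w)
      · have : cabs (eval w q) < s := by
          by_contra hge
          push_neg at hge
          exact hw.2 (by rw [hT]; exact ⟨hw.1, hge⟩)
        exact this.le.trans hs1.le
    · exact hne
  have hDm : derivedSet m ⊆ m := (isClosed_iff_derivedSet_subset m).mp hmcmp.isClosed
  have hmcnt : m.Countable := hTcnt.mono hmT
  have hDne : ¬ m ⊆ derivedSet m := exists_isolated hmcmp hmcnt hmne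
  have hDcmp : IsCompact (derivedSet m) :=
    hmcmp.of_isClosed_subset (isClosed_derivedSet m) hDm
  have hDgood : GoodFor M K T z (derivedSet m) := by
    by_contra hDbad
    have : derivedSet m ∈ B := ⟨hDm.trans hmT, hDcmp, hDbad⟩
    exact hDne (hmin this hDm)
  exact hmbad (goodFor_step hM hK hMK hzK hs0 hs1 hqz hT hmT hmcmp hDgood)

/-- A compact set `K ⊆ ℂ^N` is polynomially convex if every point outside `K`
can be separated from `K` by a polynomial. -/
def PolyConvex (N : ℕ) (K : Set (Fin N → ℂ)) : Prop :=
  ∀ z : Fin N → ℂ, z ∉ K → ∃ p : MvPolynomial (Fin N) ℂ,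
    ∀ w ∈ K, ‖MvPolynomial.eval w p‖ < ‖MvPolynomial.eval z p‖

theorem stmt_0 (N : ℕ) (M E : Set (Fin N → ℂ))
    (hM : IsCompact M) (hMpc : PolyConvex N M)
    (hE : E.Countable) (hEM : E ⊆ Mᶜ)
    (hME : IsCompact (M ∪ E)) :
    PolyConvex N (M ∪ E) := by
  intro z hzK
  set K : Set (Fin N → ℂ) := M ∪ E with hKdef
  have hzM : z ∉ M := fun h => hzK (Or.inl h)
  have hMK : M ⊆ K := subset_union_left
  -- construct the separating polynomial q normalized at z, and threshold s
  obtain ⟨q, s, hqz, hs0, hs1, hqM⟩ :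
      ∃ (q : MvPolynomial (Fin N) ℂ) (s : ℝ), eval z q = 1 ∧ 0 < s ∧ s < 1 ∧
        ∀ w ∈ M, cabs (eval w q) < s := by
    rcases M.eq_empty_or_nonempty with he | ⟨w₀, hw₀⟩
    · exact ⟨1, 1/2, by simp, by norm_num, by norm_num, by simp [he]⟩
    · obtain ⟨p₀, hp₀⟩ := hMpc z hzM
      have hr0 : cabs (eval z p₀) > 0 :=
        lt_of_le_of_lt (AbsoluteValue.nonneg cabs _) (hp₀ w₀ hw₀)
      have hrne : eval z p₀ ≠ 0 := by
        intro h; rw [h] at hr0; simp at hr0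
      set q := C (eval z p₀)⁻¹ * p₀ with hq
      have hqz : eval z q = 1 := by
        rw [hq, map_mul, eval_C, inv_mul_cancel₀ hrne]
      have hqlt : ∀ w ∈ M, cabs (eval w q) < 1 := by
        intro w hw
        rw [hq, map_mul, eval_C, map_mul, map_inv₀]
        have h2 : (cabs (eval z p₀))⁻¹ * cabs (eval w p₀) <
            (cabs (eval z p₀))⁻¹ * cabs (eval z p₀) :=
          mul_lt_mul_of_pos_left (hp₀ w hw) (inv_pos.mpr hr0)
        rwa [inv_mul_cancel₀ (ne_of_gt hr0)] at h2
      obtain ⟨a, ha0, ha1, ha⟩ := exists_lt_one_bound hM q hqlt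
      refine ⟨q, (a + 1) / 2, hqz, by linarith, by linarith, fun w hw => ?_⟩
      exact lt_of_le_of_lt (ha w hw) (by linarith)
  set T : Set (Fin N → ℂ) := {w ∈ K | s ≤ cabs (eval w q)} with hTdef
  have hTK : T ⊆ K := fun w hw => hw.1
  have hTE : T ⊆ E := by
    intro w hw
    rcases hw.1 with h | h
    · exact absurd hw.2 (not_le.mpr (hqM w h))
    · exact h
  have hTcl : IsClosed T := by
    have : T = K ∩ {w | s ≤ cabs (eval w q)} := by
      ext w; simp [hTdef, mem_inter_iff, mem_setOf_eq]
    rw [this]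
    exact hME.isClosed.inter (isClosed_le continuous_const
      (continuous_norm.comp (MvPolynomial.continuous_eval q)))
  have hTcmp : IsCompact T := hME.of_isClosed_subset hTcl hTK
  have hTcnt : T.Countable := hE.mono hTE
  obtain ⟨h, hz1, hlt, hle⟩ := goodFor_all hM hME hMK hzK hs0 hs1 hqz hTdef hTcnt hqM
    (subset_refl T) hTcmp
  -- uniform bound < 1 for h on T
  have hhT : ∀ w ∈ T, cabs (eval w h) < 1 := fun w hw => hlt w (Or.inr hw)
  obtain ⟨c, hc0, hc1, hc⟩ := exists_lt_one_bound hTcmp h hhT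
  obtain ⟨Q, hQ0, hQ⟩ := exists_bound hME q
  obtain ⟨n, hn⟩ := exists_pow_lt_of_lt_one (inv_pos.mpr hQ0) hc1
  have hQc : Q * c ^ n < 1 := by
    calc Q * c ^ n < Q * Q⁻¹ := mul_lt_mul_of_pos_left hn hQ0
      _ = 1 := mul_inv_cancel₀ (ne_of_gt hQ0)
  refine ⟨q * h ^ n, fun w hw => ?_⟩
  show cabs _ < cabs _
  have hez : cabs (eval z (q * h ^ n)) = 1 := by
    rw [map_mul, map_pow, hqz, hz1]; simp
  rw [hez]
  have habs : cabs (eval w (q * h ^ n)) =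
      cabs (eval w q) * cabs (eval w h) ^ n := by
    rw [map_mul, map_mul, map_pow, map_pow]
  rw [habs]
  by_cases hwT : w ∈ T
  · calc cabs (eval w q) * cabs (eval w h) ^ n
        ≤ Q * c ^ n := by
          apply mul_le_mul (hQ w hw) (pow_le_pow_left₀ (AbsoluteValue.nonneg _ _) (hc w hwT) n)
            (pow_nonneg (AbsoluteValue.nonneg _ _) n) hQ0.le
      _ < 1 := hQc
  · have hqw : cabs (eval w q) < s := by
      by_contra hge
      push_neg at hge
      exact hwT ⟨hw, hge⟩
    have hh1 : cabs (eval w h) ≤ 1 := hle w ⟨hw, hwT⟩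
    calc cabs (eval w q) * cabs (eval w h) ^ n
        ≤ cabs (eval w q) * 1 := by
          apply mul_le_mul_of_nonneg_left (pow_le_one₀ (AbsoluteValue.nonneg _ _) hh1)
            (AbsoluteValue.nonneg _ _)
      _ = cabs (eval w q) := mul_one _
      _ < s := hqw
      _ < 1 := hs1
end

section
/- Let a_1, …, a_l and b_1, …, b_l be two lists of distinct points in C^2 (the a_i pairwise distinct and the b_i pairwise distinct). Then there exists a holomorphic automorphism Φ of C^2, given as a finite composition of shears (z,w) ↦ (z, w + f(z)) and (z,w) ↦ (z + g(w), w) with f, g polynomials, such that Φ(a_i) = b_i for i = 1, …, l. -/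
/-- A polynomial shear of `ℂ²` in one of the two coordinate directions. -/
def IsPolyShear (s : ℂ × ℂ → ℂ × ℂ) : Prop :=
  (∃ f : Polynomial ℂ, s = fun p => (p.1, p.2 + f.eval p.1)) ∨
  (∃ g : Polynomial ℂ, s = fun p => (p.1 + g.eval p.2, p.2))

lemma exists_good {l : ℕ} (a : Fin l → ℂ × ℂ) (ha : Function.Injective a) :
    ∃ c : ℂ, Function.Injective (fun i => (a i).1 + c * (a i).2) := by
  obtain ⟨c, hc⟩ := (Set.finite_range (fun p : Fin l × Fin l =>
      ((a p.1).1 - (a p.2).1) / ((a p.2).2 - (a p.1).2))).infinite_compl.nonempty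
  refine ⟨c, fun i j h => ?_⟩
  by_contra hij
  simp only at h
  by_cases h2 : (a i).2 = (a j).2
  · have h1 : (a i).1 = (a j).1 := by rw [h2] at h; exact add_right_cancel h
    exact hij (ha (Prod.ext h1 h2))
  · apply hc
    refine ⟨(i, j), ?_⟩
    rw [div_eq_iff (sub_ne_zero.2 (Ne.symm h2))]
    linear_combination h

/-- An injective tuple can be sent to the canonical points `(i, i)` by shears. -/
lemma to_canonical {l : ℕ} (a : Fin l → ℂ × ℂ) (ha : Function.Injective a) :
    ∃ (S1 S2 S3 : (ℂ × ℂ) → (ℂ × ℂ)) (T1 T2 T3 : (ℂ × ℂ) → (ℂ × ℂ)),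
      IsPolyShear S1 ∧ IsPolyShear S2 ∧ IsPolyShear S3 ∧
      IsPolyShear T1 ∧ IsPolyShear T2 ∧ IsPolyShear T3 ∧
      (∀ i : Fin l, S3 (S2 (S1 (a i))) = (((i : ℕ) : ℂ), ((i : ℕ) : ℂ))) ∧
      (∀ i : Fin l, T1 (T2 (T3 ((((i : ℕ) : ℂ), ((i : ℕ) : ℂ)) : ℂ × ℂ))) = a i) := by
  obtain ⟨c, hc⟩ := exists_good a ha
  set x : Fin l → ℂ := fun i => (a i).1 + c * (a i).2 with hx
  have hnat : Function.Injective (fun i : Fin l => ((i : ℕ) : ℂ)) :=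
    fun i j h => Fin.ext (Nat.cast_injective h)
  set f : Polynomial ℂ := Lagrange.interpolate Finset.univ x
      (fun i => ((i : ℕ) : ℂ) - (a i).2) with hf
  have hfe : ∀ i, f.eval (x i) = ((i : ℕ) : ℂ) - (a i).2 := fun i =>
    Lagrange.eval_interpolate_at_node _ (hc.injOn) (Finset.mem_univ i)
  set g : Polynomial ℂ := Lagrange.interpolate Finset.univ (fun i : Fin l => ((i : ℕ) : ℂ))
      (fun i => ((i : ℕ) : ℂ) - x i) with hg
  have hge : ∀ i : Fin l, g.eval ((i : ℕ) : ℂ) = ((i : ℕ) : ℂ) - x i := fun i =>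
    Lagrange.eval_interpolate_at_node _ (hnat.injOn) (Finset.mem_univ i)
  set g' : Polynomial ℂ := Lagrange.interpolate Finset.univ (fun i : Fin l => ((i : ℕ) : ℂ))
      (fun i => x i - ((i : ℕ) : ℂ)) with hg'
  have hge' : ∀ i : Fin l, g'.eval ((i : ℕ) : ℂ) = x i - ((i : ℕ) : ℂ) := fun i =>
    Lagrange.eval_interpolate_at_node _ (hnat.injOn) (Finset.mem_univ i)
  set f' : Polynomial ℂ := Lagrange.interpolate Finset.univ x
      (fun i => (a i).2 - ((i : ℕ) : ℂ)) with hf'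
  have hfe' : ∀ i, f'.eval (x i) = (a i).2 - ((i : ℕ) : ℂ) := fun i =>
    Lagrange.eval_interpolate_at_node _ (hc.injOn) (Finset.mem_univ i)
  refine ⟨fun p => (p.1 + (Polynomial.C c * Polynomial.X).eval p.2, p.2),
    fun p => (p.1, p.2 + f.eval p.1),
    fun p => (p.1 + g.eval p.2, p.2),
    fun p => (p.1 + (Polynomial.C (-c) * Polynomial.X).eval p.2, p.2),
    fun p => (p.1, p.2 + f'.eval p.1),
    fun p => (p.1 + g'.eval p.2, p.2),
    Or.inr ⟨_, rfl⟩, Or.inl ⟨_, rfl⟩, Or.inr ⟨_, rfl⟩,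
    Or.inr ⟨_, rfl⟩, Or.inl ⟨_, rfl⟩, Or.inr ⟨_, rfl⟩, ?_, ?_⟩
  · intro i
    simp only [Polynomial.eval_mul, Polynomial.eval_C, Polynomial.eval_X]
    have h1 : (a i).1 + c * (a i).2 = x i := rfl
    rw [h1, hfe]
    have h2 : (a i).2 + (((i : ℕ) : ℂ) - (a i).2) = ((i : ℕ) : ℂ) := by ring
    rw [h2, hge]
    ext <;> simp
  · intro i
    simp only [Polynomial.eval_mul, Polynomial.eval_C, Polynomial.eval_X]
    rw [hge']
    have h1 : ((i : ℕ) : ℂ) + (x i - ((i : ℕ) : ℂ)) = x i := by ring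
    rw [h1, hfe']
    have h2 : ((i : ℕ) : ℂ) + ((a i).2 - ((i : ℕ) : ℂ)) = (a i).2 := by ring
    rw [h2]
    ext <;> simp [hx]

theorem stmt_11 (l : ℕ) (a b : Fin l → ℂ × ℂ)
    (ha : Function.Injective a) (hb : Function.Injective b) :
    ∃ (L : List ((ℂ × ℂ) → (ℂ × ℂ))),
      (∀ s ∈ L, IsPolyShear s) ∧
      ∀ i, (L.foldr (· ∘ ·) id) (a i) = b i := by
  obtain ⟨S1, S2, S3, _, _, _, hS1, hS2, hS3, _, _, _, hS, _⟩ := to_canonical a ha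
  obtain ⟨_, _, _, T1, T2, T3, _, _, _, hT1, hT2, hT3, _, hT⟩ := to_canonical b hb
  refine ⟨[T1, T2, T3, S3, S2, S1], ?_, ?_⟩
  · intro s hs
    simp only [List.mem_cons, List.not_mem_nil, or_false] at hs
    rcases hs with rfl | rfl | rfl | rfl | rfl | rfl <;> assumption
  · intro i
    simp only [List.foldr, Function.comp_apply, id]
    rw [hS, hT]
end
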